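/- Let θ ~ N(μ̂, σ²) with σ² = log T/(n+1) for integers n ≥ 1, T ≥ 2, and suppose μ̂ ≥ μ - √(2 log T / n). Then P(θ ≥ μ) ≥ P(θ ≥ μ̂ + √(2 log T / n)) ≥ (1/√(2π)) · (z/(z²+1)) · e^{-z²/2} with z = √(2(n+1)/n) ≤ 2, hence P(θ ≥ μ) is bounded below by a universal positive constant (e.g., 1/(3·10⁴)). -/

import Mathlib

open ProbabilityTheory MeasureTheory Real
open Filter Set NNReal

lemma hasDerivAt_h (t : ℝ) :
    HasDerivAt (fun t : ℝ => (t/(t^2+1)) * Real.exp (-t^2/2))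
      (Real.exp (-t^2/2) * ((1 - t^2)/(t^2+1)^2 - t * (t/(t^2+1)))) t := by
  have h1 : HasDerivAt (fun t : ℝ => t/(t^2+1)) ((1-t^2)/(t^2+1)^2) t := by
    have := (hasDerivAt_id t).div ((hasDerivAt_pow 2 t).add_const 1) (by positivity)
    refine this.congr_deriv ?_
    simp only [id]
    field_simp
    ring
  have h2 : HasDerivAt (fun t : ℝ => Real.exp (-t^2/2)) (Real.exp (-t^2/2) * (-t)) t := by
    have h3 : HasDerivAt (fun t : ℝ => -t^2/2) (-t) t := by
      have := ((hasDerivAt_pow 2 t).neg.div_const 2)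
      refine this.congr_deriv ?_
      push_cast
      ring
    simpa using h3.exp
  refine (h1.mul h2).congr_deriv ?_
  ring

lemma gaussian_tail (m : ℝ) (v : ℝ≥0) (hv : 0 < (v:ℝ)) (a : ℝ) :
    (1 / Real.sqrt (2*π)) * (((a-m)/Real.sqrt v) / (((a-m)/Real.sqrt v)^2 + 1)) *
      Real.exp (-((a-m)/Real.sqrt v)^2/2) ≤ ∫ x in Set.Ioi a, gaussianPDFReal m v x := by
  set σ : ℝ := Real.sqrt v with hσdef
  have hσ : 0 < σ := Real.sqrt_pos.mpr hv
  set c : ℝ := (Real.sqrt (2*π))⁻¹ with hcdef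
  have hc : 0 < c := by positivity
  set z : ℝ → ℝ := fun x => (x - m)/σ with hzdef
  set G : ℝ → ℝ := fun x => -(c * ((z x/((z x)^2+1)) * Real.exp (-(z x)^2/2))) with hGdef
  set G' : ℝ → ℝ := fun x =>
    -(c * (Real.exp (-(z x)^2/2) * ((1 - (z x)^2)/((z x)^2+1)^2 - z x * (z x/((z x)^2+1)))) * σ⁻¹)
    with hG'def
  have hz : ∀ x, HasDerivAt z σ⁻¹ x := by
    intro x
    simpa using ((hasDerivAt_id x).sub_const m).div_const σ
  have hG : ∀ x, HasDerivAt G (G' x) x := by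
    intro x
    have := (((hasDerivAt_h (z x)).const_mul c).comp x (hz x)).neg
    refine this.congr_deriv ?_
    ring
  -- pdf formula
  have pdf_eq : ∀ x, gaussianPDFReal m v x = σ⁻¹ * (c * Real.exp (-(z x)^2/2)) := by
    intro x
    rw [gaussianPDFReal]
    have h1 : Real.sqrt (2*π*v) = Real.sqrt (2*π) * σ := by
      rw [hσdef, ← Real.sqrt_mul (by positivity)]
    have h2 : -(x - m)^2/(2*v) = -(z x)^2/2 := by
      have hs : σ^2 = (v:ℝ) := Real.sq_sqrt hv.le
      rw [show z x = (x-m)/σ from rfl, div_pow, hs]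
      ring
    rw [h1, h2, mul_inv, hcdef]
    ring
  -- pointwise bounds on G'
  have key : ∀ t : ℝ, |t * (t/(t^2+1)) - (1 - t^2)/(t^2+1)^2| ≤ 1 := by
    intro t
    have ht : (0:ℝ) < (t^2+1)^2 := by positivity
    have heq : t * (t/(t^2+1)) - (1 - t^2)/(t^2+1)^2 = (t^4 + 2*t^2 - 1)/(t^2+1)^2 := by
      field_simp
      ring
    rw [heq, abs_div, abs_of_pos ht, div_le_one ht]
    rw [abs_le]
    constructor <;> nlinarith [sq_nonneg t, sq_nonneg (t^2)]
  have habs : ∀ x, |G' x| ≤ gaussianPDFReal m v x := by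
    intro x
    have : G' x = σ⁻¹ * (c * Real.exp (-(z x)^2/2)) *
        (z x * (z x/((z x)^2+1)) - (1 - (z x)^2)/((z x)^2+1)^2) := by
      simp only [G']
      ring
    rw [this, pdf_eq, abs_mul, abs_of_pos (by positivity)]
    nth_rewrite 2 [← mul_one (σ⁻¹ * (c * Real.exp (-(z x)^2/2)))]
    exact mul_le_mul_of_nonneg_left (key _) (by positivity)
  have hle : ∀ x, G' x ≤ gaussianPDFReal m v x := fun x => (le_abs_self _).trans (habs x)
  -- integrability
  have hpdf_int : IntegrableOn (gaussianPDFReal m v) (Set.Ioi a) :=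
    (integrable_gaussianPDFReal m v).integrableOn
  have hG'cont : Continuous G' := by
    have : Continuous z := by fun_prop
    fun_prop (disch := intro x; positivity)
  have hG'int : IntegrableOn G' (Set.Ioi a) := by
    refine hpdf_int.mono' hG'cont.aestronglyMeasurable ?_
    exact ae_of_all _ fun x => by simpa using habs x
  -- tendsto
  have hGtend : Tendsto G atTop (nhds 0) := by
    have hz_top : Tendsto z atTop atTop := by
      apply Tendsto.atTop_div_const hσ
      exact tendsto_atTop_add_const_right _ (-m) tendsto_id
    have hh : Tendsto (fun t : ℝ => c * ((t/(t^2+1)) * Real.exp (-t^2/2))) atTop (nhds 0) := by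
      have hub : Tendsto (fun t : ℝ => c * Real.exp (-t^2/2)) atTop (nhds 0) := by
        rw [show (0:ℝ) = c * 0 by ring]
        apply Tendsto.const_mul
        apply Real.tendsto_exp_atBot.comp
        apply Tendsto.atBot_div_const two_pos
        exact tendsto_neg_atBot_iff.mpr (tendsto_pow_atTop two_ne_zero)
      refine tendsto_of_tendsto_of_tendsto_of_le_of_le' tendsto_const_nhds hub ?_ ?_
      · filter_upwards [eventually_ge_atTop (0:ℝ)] with t ht
        positivity
      · filter_upwards [eventually_ge_atTop (0:ℝ)] with t ht
        have h1 : t/(t^2+1) ≤ 1 := by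
          rw [div_le_one (by positivity)]; nlinarith
        calc c * ((t/(t^2+1)) * Real.exp (-t^2/2))
            ≤ c * (1 * Real.exp (-t^2/2)) := by
              apply mul_le_mul_of_nonneg_left _ hc.le
              exact mul_le_mul_of_nonneg_right h1 (Real.exp_nonneg _)
          _ = c * Real.exp (-t^2/2) := by ring
    have := (hh.comp hz_top).neg
    simpa [G] using this
  -- FTC
  have hFTC : ∫ x in Set.Ioi a, G' x = 0 - G a :=
    integral_Ioi_of_hasDerivAt_of_tendsto (hG a).continuousAt.continuousWithinAt
      (fun x _ => hG x) hG'int hGtend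
  have : (1 / Real.sqrt (2*π)) * ((z a) / ((z a)^2 + 1)) * Real.exp (-(z a)^2/2)
      = ∫ x in Set.Ioi a, G' x := by
    rw [hFTC]
    simp only [G, hcdef]
    rw [one_div]
    ring
  rw [show ((a-m)/Real.sqrt v) = z a from rfl, this]
  exact setIntegral_mono_on hG'int hpdf_int measurableSet_Ioi (fun x _ => hle x)

/-- If `θ ~ N(μ̂, log T/(n+1))` with `n ≥ 1`, `T ≥ 2` and
`μ̂ ≥ μ - √(2 log T / n)`, then `P(θ ≥ μ)` is at least
`P(θ ≥ μ̂ + √(2 log T / n))`, which is at least the Gaussian anti-concentration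
bound at `z = √(2(n+1)/n) ≤ 2`; in particular `P(θ ≥ μ) ≥ 1/(3·10⁴)`. -/
theorem gaussian_posterior_optimism
    (n T : ℕ) (hn : 1 ≤ n) (hT : 2 ≤ T) (μ μhat : ℝ)
    (hμhat : μ - Real.sqrt (2 * Real.log T / n) ≤ μhat) :
    (let z : ℝ := Real.sqrt (2 * (n + 1) / n)
     let Pθ : Measure ℝ := gaussianReal μhat (Real.log T / (n + 1)).toNNReal
     (Pθ {x | μhat + Real.sqrt (2 * Real.log T / n) ≤ x}).toReal ≤
        (Pθ {x | μ ≤ x}).toReal ∧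
     z ≤ 2 ∧
     (1 / Real.sqrt (2 * Real.pi)) * (z / (z ^ 2 + 1)) * Real.exp (-z ^ 2 / 2) ≤
        (Pθ {x | μhat + Real.sqrt (2 * Real.log T / n) ≤ x}).toReal ∧
     1 / (3 * 10 ^ 4) ≤ (Pθ {x | μ ≤ x}).toReal) := by
  intro z Pθ
  have hn' : (0:ℝ) < n := by exact_mod_cast Nat.pos_of_ne_zero (by omega)
  have hn1 : (1:ℝ) ≤ n := by exact_mod_cast hn
  have hL : 0 < Real.log T := Real.log_pos (by exact_mod_cast lt_of_lt_of_le one_lt_two hT)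
  have hv0 : 0 < Real.log T / ((n:ℝ) + 1) := by positivity
  set v : ℝ≥0 := (Real.log T / ((n:ℝ) + 1)).toNNReal with hvdef
  have hvc : ((v:ℝ)) = Real.log T / ((n:ℝ) + 1) := Real.coe_toNNReal _ hv0.le
  have hvne : v ≠ 0 := by
    simp only [hvdef, ne_eq, Real.toNNReal_eq_zero, not_le]
    exact hv0
  have hvpos : 0 < (v:ℝ) := by rw [hvc]; exact hv0
  set s : ℝ := Real.sqrt (2 * Real.log T / n) with hsdef
  have hs0 : 0 ≤ s := Real.sqrt_nonneg _
  -- measure as integral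
  have hmeas : ∀ b : ℝ, (Pθ {x | b ≤ x}).toReal = ∫ x in Set.Ioi b, gaussianPDFReal μhat v x := by
    intro b
    have hset : {x : ℝ | b ≤ x} = Set.Ici b := rfl
    rw [show Pθ = gaussianReal μhat v from rfl, hset,
      gaussianReal_apply_eq_integral μhat hvne,
      ENNReal.toReal_ofReal (setIntegral_nonneg measurableSet_Ici
        (fun x _ => gaussianPDFReal_nonneg _ _ _)),
      integral_Ici_eq_integral_Ioi]
  -- z bounds
  have hz : z = Real.sqrt (2 * ((n:ℝ) + 1) / n) := rfl
  have hz1 : (1:ℝ) ≤ z := by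
    have hq : (1:ℝ) ≤ 2 * ((n:ℝ) + 1) / n := by
      rw [le_div_iff₀ hn']; linarith
    calc (1:ℝ) = Real.sqrt 1 := Real.sqrt_one.symm
      _ ≤ z := Real.sqrt_le_sqrt hq
  have hz2 : z ≤ 2 := by
    have hq : 2 * ((n:ℝ) + 1) / n ≤ 4 := by
      rw [div_le_iff₀ hn']; nlinarith
    calc z ≤ Real.sqrt 4 := Real.sqrt_le_sqrt hq
      _ = 2 := by rw [show (4:ℝ) = 2^2 by norm_num, Real.sqrt_sq (by norm_num)]
  -- standardized value
  have hzs : ((μhat + s) - μhat) / Real.sqrt v = z := by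
    rw [hz, show μhat + s - μhat = s by ring, hsdef, hvc,
      div_eq_iff (by positivity), ← Real.sqrt_mul (by positivity)]
    congr 1
    field_simp
  -- conjunct 1
  have h1 : (Pθ {x | μhat + s ≤ x}).toReal ≤ (Pθ {x | μ ≤ x}).toReal := by
    apply ENNReal.toReal_mono (measure_ne_top _ _)
    apply measure_mono
    intro x hx
    simp only [Set.mem_setOf_eq] at *
    linarith
  -- conjunct 3
  have h3 : (1 / Real.sqrt (2 * π)) * (z / (z ^ 2 + 1)) * Real.exp (-z ^ 2 / 2) ≤
      (Pθ {x | μhat + s ≤ x}).toReal := by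
    rw [hmeas]
    have := gaussian_tail μhat v hvpos (μhat + s)
    rwa [hzs] at this
  -- numeric bound
  have hnum : (1:ℝ) / (3 * 10 ^ 4) ≤
      (1 / Real.sqrt (2 * π)) * (z / (z ^ 2 + 1)) * Real.exp (-z ^ 2 / 2) := by
    have hA : (1:ℝ)/3 ≤ 1 / Real.sqrt (2 * π) := by
      apply one_div_le_one_div_of_le (by positivity)
      rw [show (3:ℝ) = Real.sqrt (3^2) by rw [Real.sqrt_sq]; norm_num]
      apply Real.sqrt_le_sqrt
      nlinarith [Real.pi_le_four]
    have hB : (2:ℝ)/5 ≤ z / (z ^ 2 + 1) := by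
      rw [div_le_div_iff₀ (by norm_num) (by positivity)]
      nlinarith
    have hC : (1:ℝ)/8 ≤ Real.exp (-z ^ 2 / 2) := by
      have he2 : Real.exp 2 < 8 := by
        have h := Real.exp_one_lt_d9
        have : Real.exp 2 = Real.exp 1 * Real.exp 1 := by
          rw [← Real.exp_add]; norm_num
        nlinarith [Real.exp_pos 1]
      have : Real.exp (-2) ≥ 1/8 := by
        rw [Real.exp_neg, ← one_div]
        exact one_div_le_one_div_of_le (Real.exp_pos 2) he2.le
      refine le_trans this (Real.exp_le_exp.mpr ?_)
      nlinarith
    calc (1:ℝ) / (3 * 10 ^ 4) ≤ (1/3) * (2/5) * (1/8) := by norm_num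
      _ ≤ (1 / Real.sqrt (2 * π)) * (z / (z ^ 2 + 1)) * Real.exp (-z ^ 2 / 2) := by
          gcongr <;> first | positivity | exact hA | exact hB | exact hC
  exact ⟨h1, hz2, h3, le_trans (le_trans hnum h3) h1⟩
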